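/- For n ≥ 1, λ ∈ ℂ with λ ≠ 0, and every k ≥ 0, the ranks satisfy rank((J_{n,λ} − λ·I_n)^k) = rank((J_{n,λ}⁻¹ − (1/λ)·I_n)^k). In particular, for 1 ≤ k ≤ n−1 both ranks are nonzero, and both are 0 for k = n. -/

import Mathlib

open Matrix

/-- The `n × n` nilpotent Jordan block over `ℂ`: `1`s on the superdiagonal, `0` elsewhere. -/
def Mblock (n : ℕ) : Matrix (Fin n) (Fin n) ℂ :=
  Matrix.of fun i j => if (j : ℕ) = (i : ℕ) + 1 then 1 else 0

/-- The Jordan cell `J_{n,λ} = λ·I_n + M_n`. -/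
def Jcell (n : ℕ) (lam : ℂ) : Matrix (Fin n) (Fin n) ℂ :=
  lam • (1 : Matrix (Fin n) (Fin n) ℂ) + Mblock n

lemma Mblock_pow (n k : ℕ) : (Mblock n) ^ k =
    Matrix.of fun i j : Fin n => if (j : ℕ) = (i : ℕ) + k then 1 else 0 := by
  induction k with
  | zero =>
    ext i j
    simp [Matrix.one_apply, Fin.ext_iff, eq_comm]
  | succ k ih =>
    ext i j
    rw [pow_succ, ih]
    simp only [Matrix.mul_apply, Matrix.of_apply, Mblock]
    by_cases h : (i : ℕ) + k < n
    · rw [Finset.sum_eq_single (⟨(i : ℕ) + k, h⟩ : Fin n)]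
      · simp [Fin.ext_iff, add_assoc]
      · intro l _ hl
        have : (l : ℕ) ≠ (i : ℕ) + k := by
          intro he; exact hl (Fin.ext he)
        simp [this]
      · simp
    · have h1 : ∀ l : Fin n, (l : ℕ) ≠ (i : ℕ) + k := by
        intro l he
        exact h (he ▸ l.isLt)
      have h2 : (j : ℕ) ≠ (i : ℕ) + (k + 1) := by
        intro he
        exact h (lt_of_le_of_lt (by omega) (he ▸ j.isLt))
      simp [h1, h2]

lemma Mblock_rank_pow_ne_zero (n k : ℕ) (hk : k < n) : ((Mblock n) ^ k).rank ≠ 0 := by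
  intro h0
  have hA : ((Mblock n) ^ k) ≠ 0 := by
    intro hz
    have := congrFun (congrFun ((Mblock_pow n k).symm.trans hz) ⟨0, Nat.pos_of_ne_zero (by omega)⟩)
      ⟨k, hk⟩
    simp at this
  apply hA
  have : LinearMap.range (((Mblock n) ^ k).mulVecLin) = ⊥ := by
    rw [Matrix.rank] at h0
    exact Submodule.finrank_eq_zero.mp h0
  have hzero : ((Mblock n) ^ k).mulVecLin = 0 := LinearMap.range_eq_bot.mp this
  ext i j
  have := congrFun (congrArg (fun f => f (Pi.single j 1)) (congrArg DFunLike.coe hzero)) i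
  simpa [Matrix.mulVecLin, Matrix.mulVec_single] using this

/-- For `λ ≠ 0` and every `k`, `rank((J_{n,λ} - λ·I)^k) = rank((J_{n,λ}⁻¹ - (1/λ)·I)^k)`;
in particular both ranks are nonzero for `1 ≤ k ≤ n - 1` and both vanish for `k = n`. -/
theorem Jcell_pow_rank_eq_inv_pow_rank (n : ℕ) (hn : 1 ≤ n) (lam : ℂ) (hlam : lam ≠ 0) :
    (∀ k : ℕ,
        ((Jcell n lam - lam • (1 : Matrix (Fin n) (Fin n) ℂ)) ^ k).rank =
          (((Jcell n lam)⁻¹ - lam⁻¹ • (1 : Matrix (Fin n) (Fin n) ℂ)) ^ k).rank) ∧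
      (∀ k : ℕ, 1 ≤ k → k ≤ n - 1 →
        ((Jcell n lam - lam • (1 : Matrix (Fin n) (Fin n) ℂ)) ^ k).rank ≠ 0 ∧
          (((Jcell n lam)⁻¹ - lam⁻¹ • (1 : Matrix (Fin n) (Fin n) ℂ)) ^ k).rank ≠ 0) ∧
      ((Jcell n lam - lam • (1 : Matrix (Fin n) (Fin n) ℂ)) ^ n).rank = 0 ∧
        (((Jcell n lam)⁻¹ - lam⁻¹ • (1 : Matrix (Fin n) (Fin n) ℂ)) ^ n).rank = 0 := by
  set J := Jcell n lam with hJ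
  set M := Mblock n with hMdef
  have hJM : J - lam • (1 : Matrix (Fin n) (Fin n) ℂ) = M := by
    simp [hJ, Jcell, hMdef]
  -- J is upper triangular with diagonal lam, so det J = lam ^ n
  have hdet : IsUnit J.det := by
    have htri : J.BlockTriangular id := by
      intro i j hij
      have h1 : (i : Fin n) ≠ j := fun he => absurd (he ▸ hij) (lt_irrefl _)
      have h2 : (j : ℕ) ≠ (i : ℕ) + 1 := by
        have : (j : ℕ) < (i : ℕ) := hij
        omega
      simp [hJ, Jcell, Mblock, Matrix.one_apply, h1, h1.symm, h2]
    have hd : J.det = lam ^ n := by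
      rw [Matrix.det_of_upperTriangular htri]
      have : ∀ i : Fin n, J i i = lam := by
        intro i
        simp [hJ, Jcell, Mblock, Matrix.one_apply]
      simp [this]
    rw [hd]
    exact (isUnit_iff_ne_zero.mpr (pow_ne_zero _ hlam))
  -- M commutes with J and hence with J⁻¹
  have hcJ : Commute M J := by
    simp only [hJ, Jcell, Commute, SemiconjBy]
    noncomm_ring
  have hcJi : Commute M J⁻¹ := by
    have h1 := Matrix.nonsing_inv_mul J hdet
    have h2 := Matrix.mul_nonsing_inv J hdet
    unfold Commute SemiconjBy
    calc M * J⁻¹ = J⁻¹ * (J * M) * J⁻¹ := by rw [← Matrix.mul_assoc, h1, Matrix.one_mul]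
    _ = J⁻¹ * (M * J) * J⁻¹ := by rw [hcJ.eq]
    _ = J⁻¹ * M * (J * J⁻¹) := by noncomm_ring
    _ = J⁻¹ * M := by rw [h2, Matrix.mul_one]
  -- key identity: J⁻¹ - lam⁻¹ • 1 = (-lam⁻¹) • (J⁻¹ * M)
  have hkey : J⁻¹ - lam⁻¹ • (1 : Matrix (Fin n) (Fin n) ℂ) = (-lam⁻¹) • (J⁻¹ * M) := by
    have h1 : J⁻¹ * J = 1 := Matrix.nonsing_inv_mul J hdet
    have h2 : lam • J⁻¹ + J⁻¹ * M = 1 := by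
      calc lam • J⁻¹ + J⁻¹ * M = J⁻¹ * (lam • 1 + M) := by
            rw [Matrix.mul_add, Matrix.mul_smul, Matrix.mul_one]
      _ = 1 := by rw [← Jcell, ← hJ, h1]
    have h4 : J⁻¹ = lam⁻¹ • ((1 : Matrix (Fin n) (Fin n) ℂ) - J⁻¹ * M) := by
      calc J⁻¹ = lam⁻¹ • (lam • J⁻¹) := by
            rw [smul_smul, inv_mul_cancel₀ hlam, one_smul]
      _ = lam⁻¹ • ((1 : Matrix (Fin n) (Fin n) ℂ) - J⁻¹ * M) := by
            rw [eq_sub_of_add_eq h2]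
    nth_rewrite 1 [h4]
    rw [smul_sub, neg_smul]
    abel
  -- rank of each power of rhs equals rank of M ^ k
  have hrank : ∀ k : ℕ,
      ((J⁻¹ - lam⁻¹ • (1 : Matrix (Fin n) (Fin n) ℂ)) ^ k).rank = (M ^ k).rank := by
    intro k
    rw [hkey]
    rw [smul_pow]
    have hpow : (J⁻¹ * M) ^ k = (J⁻¹) ^ k * M ^ k := hcJi.symm.mul_pow k
    rw [hpow]
    have hsmul : ((-lam⁻¹) ^ k) • ((J⁻¹) ^ k * M ^ k) =
        (((-lam⁻¹) ^ k) • (1 : Matrix (Fin n) (Fin n) ℂ)) * ((J⁻¹) ^ k * M ^ k) := by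
      rw [Matrix.smul_mul, Matrix.one_mul]
    rw [hsmul]
    have hu1 : IsUnit ((((-lam⁻¹) ^ k) • (1 : Matrix (Fin n) (Fin n) ℂ)).det) := by
      rw [Matrix.det_smul, Matrix.det_one, mul_one]
      exact isUnit_iff_ne_zero.mpr (pow_ne_zero _ (pow_ne_zero _ (neg_ne_zero.mpr
        (inv_ne_zero hlam))))
    rw [Matrix.rank_mul_eq_right_of_isUnit_det _ _ hu1]
    have hu2 : IsUnit (((J⁻¹) ^ k).det) := by
      rw [Matrix.det_pow, Matrix.det_nonsing_inv, Ring.inverse_eq_inv]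
      exact isUnit_iff_ne_zero.mpr (pow_ne_zero _ (inv_ne_zero hdet.ne_zero))
    rw [Matrix.rank_mul_eq_right_of_isUnit_det _ _ hu2]
  have hMn : M ^ n = 0 := by
    rw [hMdef, Mblock_pow]
    ext i j
    have : (j : ℕ) ≠ (i : ℕ) + n := by
      have := j.isLt
      omega
    simp [this]
  refine ⟨fun k => by rw [hJM, hrank], fun k hk1 hk2 => ?_, ?_, ?_⟩
  · have hkn : k < n := by omega
    constructor
    · rw [hJM]; exact Mblock_rank_pow_ne_zero n k hkn
    · rw [hrank]; exact Mblock_rank_pow_ne_zero n k hkn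
  · rw [hJM, hMn, Matrix.rank_zero]
  · rw [hrank, hMn, Matrix.rank_zero]
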